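/- Let k ≥ 2, A = M_k, B = P₄ ∪ M_{k-2}, F = A + B, and let H be the graph obtained from K_{k-1} + K(V₁,V₂,V₃) (complete 3-partite graph joined to a clique on k-1 vertices) by adding one edge xy inside V₁, where |V_i| ≥ 3k for each i. Then in every copy of F in H, either all vertices of A lie in X ∪ V₁ and all vertices of B lie in V₂ ∪ V₃, or all vertices of B lie in X ∪ V₁ and all vertices of A lie in V₂ ∪ V₃ (where X is the vertex set of the clique K_{k-1}). -/

import Mathlib

open SimpleGraph

/-- The join `G + H` of two graphs: their disjoint union together with all edges between them. -/
def joinG {α β : Type*} (G : SimpleGraph α) (H : SimpleGraph β) : SimpleGraph (α ⊕ β) where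
  Adj u v := match u, v with
    | Sum.inl a, Sum.inl b => G.Adj a b
    | Sum.inr a, Sum.inr b => H.Adj a b
    | _, _ => True
  symm := by
    constructor
    intro u v h
    cases u <;> cases v <;> first | exact G.symm.symm _ _ h | exact H.symm.symm _ _ h | trivial
  loopless := by
    constructor
    intro u
    cases u with
    | inl a => exact G.loopless.irrefl a
    | inr a => exact H.loopless.irrefl a

/-- The matching `M_k` with `k` edges, realised on `Fin k × Fin 2`. -/
def matchingGraph (k : ℕ) : SimpleGraph (Fin k × Fin 2) where
  Adj u v := u.1 = v.1 ∧ u.2 ≠ v.2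
  symm := ⟨fun _ _ h => ⟨h.1.symm, h.2.symm⟩⟩
  loopless := ⟨fun _ h => h.2 rfl⟩

/-- The label (class) of a vertex of `K_{j} + K(V₁,V₂,V₃)`: `0` for the clique `X`, and
`1,2,3` for the three parts. -/
def labF {V₁ V₂ V₃ : Type*} {j : ℕ} : Fin j ⊕ (V₁ ⊕ V₂ ⊕ V₃) → ℕ
  | Sum.inl _ => 0
  | Sum.inr (Sum.inl _) => 1
  | Sum.inr (Sum.inr (Sum.inl _)) => 2
  | Sum.inr (Sum.inr (Sum.inr _)) => 3

/-- The host graph `H`: the complete 3-partite graph `K(V₁,V₂,V₃)` joined to a clique on `j`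
vertices, with one extra edge `xy` added inside `V₁`. -/
def hostGraph {V₁ V₂ V₃ : Type*} (j : ℕ) (x y : V₁) (hxy : x ≠ y) :
    SimpleGraph (Fin j ⊕ (V₁ ⊕ V₂ ⊕ V₃)) where
  Adj u v := (labF u ≠ labF v) ∨ (labF u = 0 ∧ labF v = 0 ∧ u ≠ v) ∨
    (u = Sum.inr (Sum.inl x) ∧ v = Sum.inr (Sum.inl y)) ∨
    (u = Sum.inr (Sum.inl y) ∧ v = Sum.inr (Sum.inl x))
  symm := by
    constructor
    rintro u v (h | ⟨h1, h2, h3⟩ | ⟨h1, h2⟩ | ⟨h1, h2⟩)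
    · exact Or.inl h.symm
    · exact Or.inr (Or.inl ⟨h2, h1, h3.symm⟩)
    · exact Or.inr (Or.inr (Or.inr ⟨h2, h1⟩))
    · exact Or.inr (Or.inr (Or.inl ⟨h2, h1⟩))
  loopless := by
    constructor
    rintro u (h | ⟨h1, h2, h3⟩ | ⟨h1, h2⟩ | ⟨h1, h2⟩)
    · exact h rfl
    · exact h3 rfl
    · have h := h1.symm.trans h2
      simp only [Sum.inr.injEq, Sum.inl.injEq] at h
      exact hxy h
    · have h := h1.symm.trans h2
      simp only [Sum.inr.injEq, Sum.inl.injEq] at h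
      exact hxy h.symm


section Helpers

variable {V₁ V₂ V₃ : Type*} {j : ℕ}

lemma labF_le_three (u : Fin j ⊕ (V₁ ⊕ V₂ ⊕ V₃)) : labF u ≤ 3 := by
  rcases u with c | (v | v | v) <;> simp [labF]

lemma labF_eq_zero (u : Fin j ⊕ (V₁ ⊕ V₂ ⊕ V₃)) (h : labF u = 0) :
    ∃ c, u = Sum.inl c := by
  rcases u with c | (v | v | v)
  · exact ⟨c, rfl⟩
  all_goals simp [labF] at h

lemma labF_eq_one (u : Fin j ⊕ (V₁ ⊕ V₂ ⊕ V₃)) (h : labF u = 1) :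
    ∃ v : V₁, u = Sum.inr (Sum.inl v) := by
  rcases u with c | (v | v | v)
  · simp [labF] at h
  · exact ⟨v, rfl⟩
  all_goals simp [labF] at h

lemma adj11 {x y : V₁} {hxy : x ≠ y} {u v : Fin j ⊕ (V₁ ⊕ V₂ ⊕ V₃)}
    (h : (hostGraph j x y hxy).Adj u v) (hu : labF u = 1) (hv : labF v = 1) :
    (u = Sum.inr (Sum.inl x) ∧ v = Sum.inr (Sum.inl y)) ∨
    (u = Sum.inr (Sum.inl y) ∧ v = Sum.inr (Sum.inl x)) := by
  rcases h with h | ⟨h1, _, _⟩ | h | h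
  · exact absurd (hu.trans hv.symm) h
  · omega
  · exact Or.inl h
  · exact Or.inr h

lemma adj22 {x y : V₁} {hxy : x ≠ y} {u v : Fin j ⊕ (V₁ ⊕ V₂ ⊕ V₃)}
    (h : (hostGraph j x y hxy).Adj u v) (hu : 2 ≤ labF u) (hv : 2 ≤ labF v) :
    labF u ≠ labF v := by
  rcases h with h | ⟨h1, _, _⟩ | ⟨h1, h2⟩ | ⟨h1, h2⟩
  · exact h
  · omega
  · subst h1; simp [labF] at hu
  · subst h1; simp [labF] at hu

lemma keyLemma (x y : V₁) (hxy : x ≠ y)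
    {ι : Type*} [Fintype ι] (hcard : j < Fintype.card ι)
    (ψ : Option (ι × Fin 2) → Fin j ⊕ (V₁ ⊕ V₂ ⊕ V₃))
    (hinj : Function.Injective ψ)
    (hlab : ∀ p, labF (ψ p) ≤ 1)
    (hadjE : ∀ i : ι, (hostGraph j x y hxy).Adj (ψ (some (i, 0))) (ψ (some (i, 1))))
    (hadjW : ∀ p, (hostGraph j x y hxy).Adj (ψ none) (ψ (some p))) : False := by
  classical
  have hl01 : ∀ p, labF (ψ p) = 0 ∨ labF (ψ p) = 1 := fun p => by have := hlab p; omega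
  have hP : ∀ i : ι, labF (ψ (some (i, 0))) = 1 → labF (ψ (some (i, 1))) = 1 →
      (ψ (some (i, 0)) = Sum.inr (Sum.inl x) ∧ ψ (some (i, 1)) = Sum.inr (Sum.inl y)) ∨
      (ψ (some (i, 0)) = Sum.inr (Sum.inl y) ∧ ψ (some (i, 1)) = Sum.inr (Sum.inl x)) :=
    fun i h0 h1 => adj11 (hadjE i) h0 h1
  rcases hl01 none with hw | hw
  · -- the extra vertex lies in the clique X
    obtain ⟨cw, hcw⟩ := labF_eq_zero _ hw
    set E : ι → Prop := fun i =>
      ∃ c, ψ (some (i, 0)) = Sum.inl c ∨ ψ (some (i, 1)) = Sum.inl c with hE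
    have hex : ∀ i : ι, E i ∨
        (labF (ψ (some (i, 0))) = 1 ∧ labF (ψ (some (i, 1))) = 1) := by
      intro i
      rcases hl01 (some (i, 0)) with h0 | h0
      · obtain ⟨c, hc⟩ := labF_eq_zero _ h0; exact Or.inl ⟨c, Or.inl hc⟩
      · rcases hl01 (some (i, 1)) with h1 | h1
        · obtain ⟨c, hc⟩ := labF_eq_zero _ h1; exact Or.inl ⟨c, Or.inr hc⟩
        · exact Or.inr ⟨h0, h1⟩
    set g : Option ι → Option (Fin j) := fun o =>
      match o with
      | none => some cw
      | some i => if h : E i then some h.choose else none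
      with hg
    have hgsome : ∀ (i : ι) (c : Fin j), g (some i) = some c →
        ψ (some (i, 0)) = Sum.inl c ∨ ψ (some (i, 1)) = Sum.inl c := by
      intro i c hc
      rw [hg] at hc
      simp only at hc
      split at hc
      · rename_i h
        have := h.choose_spec
        cases hc
        exact this
      · exact absurd hc (by simp)
    have hgnone : ∀ i : ι, g (some i) = none →
        labF (ψ (some (i, 0))) = 1 ∧ labF (ψ (some (i, 1))) = 1 := by
      intro i hc
      rw [hg] at hc
      simp only at hc
      split at hc
      · exact absurd hc (by simp)
      · rename_i h
        exact (hex i).resolve_left h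
    have hginj : Function.Injective g := by
      rintro (_ | i) (_ | i') hgg
      · rfl
      · rcases hgo : g (some i') with _ | c
        · rw [hgo] at hgg; exact absurd hgg.symm (by simp [hg])
        · rw [hgo] at hgg
          have hc : cw = c := by
            have : g none = some cw := rfl
            rw [this] at hgg; exact Option.some_injective _ hgg
          subst hc
          rcases hgsome i' cw hgo with h | h
          · exact absurd (hinj (hcw.symm ▸ h.symm ▸ rfl : ψ none = ψ (some (i', 0)))) (by simp)
          · exact absurd (hinj (hcw.symm ▸ h.symm ▸ rfl : ψ none = ψ (some (i', 1)))) (by simp)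
      · rcases hgo : g (some i) with _ | c
        · rw [hgo] at hgg; exact absurd hgg (by simp [hg])
        · rw [hgo] at hgg
          have hc : c = cw := by
            have : g none = some cw := rfl
            rw [this] at hgg; exact Option.some_injective _ hgg
          subst hc
          rcases hgsome i c hgo with h | h
          · exact absurd (hinj (hcw.symm ▸ h.symm ▸ rfl : ψ none = ψ (some (i, 0)))) (by simp)
          · exact absurd (hinj (hcw.symm ▸ h.symm ▸ rfl : ψ none = ψ (some (i, 1)))) (by simp)
      · rcases hgo : g (some i) with _ | c <;> rcases hgo' : g (some i') with _ | c'
        · -- both none: both edges map onto {x,y}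
          have h1 := hgnone i hgo
          have h2 := hgnone i' hgo'
          have p1 := hP i h1.1 h1.2
          have p2 := hP i' h2.1 h2.2
          congr 1
          rcases p1 with ⟨e1, e2⟩ | ⟨e1, e2⟩ <;> rcases p2 with ⟨f1, f2⟩ | ⟨f1, f2⟩
          · exact congrArg Prod.fst (Option.some_injective _ (hinj (e1.trans f1.symm)))
          · exact absurd (congrArg Prod.snd (Option.some_injective _ (hinj (e1.trans f2.symm))))
              (show (0 : Fin 2) ≠ 1 by decide)
          · exact absurd (congrArg Prod.snd (Option.some_injective _ (hinj (e1.trans f2.symm))))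
              (show (0 : Fin 2) ≠ 1 by decide)
          · exact congrArg Prod.fst (Option.some_injective _ (hinj (e1.trans f1.symm)))
        · rw [hgo, hgo'] at hgg; exact absurd hgg (by simp)
        · rw [hgo, hgo'] at hgg; exact absurd hgg (by simp)
        · rw [hgo, hgo'] at hgg
          have hcc : c = c' := Option.some_injective _ hgg
          subst hcc
          congr 1
          rcases hgsome i c hgo with h | h <;> rcases hgsome i' c hgo' with h' | h'
          all_goals {
            have := hinj (h.trans h'.symm)
            simp only [Option.some.injEq, Prod.mk.injEq] at this
            first
            | exact this.1
            | exact absurd this.2 (by decide) }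
    have hcard2 := Fintype.card_le_of_injective g hginj
    simp only [Fintype.card_option, Fintype.card_fin] at hcard2
    omega
  · -- the extra vertex lies in V₁
    obtain ⟨vw, hvw⟩ := labF_eq_one _ hw
    have hex : ∀ i : ι, ∃ c, ψ (some (i, 0)) = Sum.inl c ∨ ψ (some (i, 1)) = Sum.inl c := by
      intro i
      rcases hl01 (some (i, 0)) with h0 | h0
      · obtain ⟨c, hc⟩ := labF_eq_zero _ h0; exact ⟨c, Or.inl hc⟩
      rcases hl01 (some (i, 1)) with h1 | h1
      · obtain ⟨c, hc⟩ := labF_eq_zero _ h1; exact ⟨c, Or.inr hc⟩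
      exfalso
      rcases hP i h0 h1 with ⟨ha, hb⟩ | ⟨ha, hb⟩ <;>
        rcases adj11 (hadjW (i, 0)) hw h0 with ⟨hc, hd⟩ | ⟨hc, hd⟩
      · exact hxy (by simpa using ha.symm.trans hd)
      · exact absurd (hinj (hc.trans hb.symm)) (by simp)
      · exact absurd (hinj (hc.trans hb.symm)) (by simp)
      · exact hxy (by simpa using hd.symm.trans ha)
    have hginj : Function.Injective (fun i => (hex i).choose) := by
      intro i i' hii
      have e1 := (hex i).choose_spec
      have e2 := (hex i').choose_spec
      simp only at hii
      rw [hii] at e1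
      rcases e1 with h | h <;> rcases e2 with h' | h'
      all_goals {
        have := hinj (h.trans h'.symm)
        simp only [Option.some.injEq, Prod.mk.injEq] at this
        first
        | exact this.1
        | exact absurd this.2 (by decide) }
    have hcard2 := Fintype.card_le_of_injective _ hginj
    have hfj : Fintype.card (Fin j) = j := Fintype.card_fin j
    omega

lemma crossLemma (hj : 1 ≤ j) (x y : V₁) (hxy : x ≠ y)
    {ιA ιB : Type*} [Fintype ιA] [Fintype ιB]
    (hcA : j < Fintype.card ιA) (hcB : j < Fintype.card ιB)
    (ψ : ιA ⊕ ιB → Fin j ⊕ (V₁ ⊕ V₂ ⊕ V₃))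
    (hinj : Function.Injective ψ)
    (hlab : ∀ p, labF (ψ p) ≤ 1)
    (hadj : ∀ i jj, (hostGraph j x y hxy).Adj (ψ (Sum.inl i)) (ψ (Sum.inr jj))) : False := by
  classical
  have hl01 : ∀ p, labF (ψ p) = 0 ∨ labF (ψ p) = 1 := fun p => by have := hlab p; omega
  have hexA : ∃ i, labF (ψ (Sum.inl i)) = 1 := by
    by_contra h
    push_neg at h
    have h0 : ∀ i, ∃ c, ψ (Sum.inl i) = Sum.inl c := fun i =>
      labF_eq_zero _ ((hl01 (Sum.inl i)).resolve_right (h i))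
    have hinj0 : Function.Injective (fun i => (h0 i).choose) := by
      intro i i' hii
      have e1 := (h0 i).choose_spec
      have e2 := (h0 i').choose_spec
      simp only at hii
      rw [hii] at e1
      have := hinj (e1.trans e2.symm)
      simpa using this
    have := Fintype.card_le_of_injective _ hinj0
    simp only [Fintype.card_fin] at this
    omega
  have hexB : ∃ jj, labF (ψ (Sum.inr jj)) = 1 := by
    by_contra h
    push_neg at h
    have h0 : ∀ jj, ∃ c, ψ (Sum.inr jj) = Sum.inl c := fun jj =>
      labF_eq_zero _ ((hl01 (Sum.inr jj)).resolve_right (h jj))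
    have hinj0 : Function.Injective (fun jj => (h0 jj).choose) := by
      intro i i' hii
      have e1 := (h0 i).choose_spec
      have e2 := (h0 i').choose_spec
      simp only at hii
      rw [hii] at e1
      have := hinj (e1.trans e2.symm)
      simpa using this
    have := Fintype.card_le_of_injective _ hinj0
    simp only [Fintype.card_fin] at this
    omega
  obtain ⟨i₀, hi₀⟩ := hexA
  obtain ⟨j₀, hj₀⟩ := hexB
  have hall : ∀ p, labF (ψ p) = 1 →
      ψ p = Sum.inr (Sum.inl x) ∨ ψ p = Sum.inr (Sum.inl y) := by
    rintro (i | jj) h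
    · exact (adj11 (hadj i j₀) h hj₀).imp (fun h => h.1) (fun h => h.1)
    · exact ((adj11 (hadj i₀ jj) hi₀ h).imp (fun h => h.2) (fun h => h.2)).symm
  set G : ιA ⊕ ιB → Fin j ⊕ Fin 2 := fun p =>
    if h : labF (ψ p) = 0 then Sum.inl (labF_eq_zero _ h).choose
    else if ψ p = Sum.inr (Sum.inl x) then Sum.inr 0 else Sum.inr 1
    with hG
  have hGinj : Function.Injective G := by
    intro p p' hpp
    by_cases h : labF (ψ p) = 0 <;> by_cases h' : labF (ψ p') = 0
    · rw [hG] at hpp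
      simp only [dif_pos h, dif_pos h'] at hpp
      have e1 := (labF_eq_zero _ h).choose_spec
      have e2 := (labF_eq_zero _ h').choose_spec
      apply hinj
      rw [e1, e2]
      simpa using hpp
    · rw [hG] at hpp
      simp only [dif_pos h, dif_neg h'] at hpp
      split at hpp <;> exact absurd hpp (by simp)
    · rw [hG] at hpp
      simp only [dif_pos h', dif_neg h] at hpp
      split at hpp <;> exact absurd hpp (by simp)
    · rw [hG] at hpp
      simp only [dif_neg h, dif_neg h'] at hpp
      have h1 : labF (ψ p) = 1 := (hl01 p).resolve_left h
      have h1' : labF (ψ p') = 1 := (hl01 p').resolve_left h'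
      by_cases hx1 : ψ p = Sum.inr (Sum.inl x) <;> by_cases hx2 : ψ p' = Sum.inr (Sum.inl x)
      · exact hinj (hx1.trans hx2.symm)
      · rw [if_pos hx1, if_neg hx2] at hpp
        exact absurd (Sum.inr_injective hpp) (by decide)
      · rw [if_neg hx1, if_pos hx2] at hpp
        exact absurd (Sum.inr_injective hpp) (by decide)
      · apply hinj
        rw [(hall p h1).resolve_left hx1, (hall p' h1').resolve_left hx2]
  have := Fintype.card_le_of_injective G hGinj
  simp only [Fintype.card_sum, Fintype.card_fin] at this
  omega

end Helpers

/-- The two endpoints of the `e`-th disjoint edge of `P₄ ∪ M_{k-2}`. -/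
def edgeB (k : ℕ) : (Fin 2 ⊕ Fin (k - 2)) × Fin 2 → Fin 4 ⊕ Fin (k - 2) × Fin 2
  | (Sum.inl i, t) => Sum.inl ⟨2 * i.val + t.val, by have := i.isLt; have := t.isLt; omega⟩
  | (Sum.inr m, t) => Sum.inr (m, t)

lemma edgeB_inj (k : ℕ) : Function.Injective (edgeB k) := by
  rintro ⟨(i | m), t⟩ ⟨(i' | m'), t'⟩ h <;>
    simp only [edgeB, Sum.inl.injEq, Sum.inr.injEq, Fin.mk.injEq, Prod.mk.injEq] at h
  · have hi := i.isLt; have hi' := i'.isLt; have ht := t.isLt; have ht' := t'.isLt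
    have : i = i' ∧ t = t' := ⟨Fin.ext (by omega), Fin.ext (by omega)⟩
    rw [this.1, this.2]
  · exact absurd h (by simp)
  · exact absurd h (by simp)
  · rw [h.1, h.2]

lemma edgeB_adj (k : ℕ) (e : Fin 2 ⊕ Fin (k - 2)) :
    ((pathGraph 4) ⊕g matchingGraph (k - 2)).Adj (edgeB k (e, 0)) (edgeB k (e, 1)) := by
  rcases e with i | m
  · show (pathGraph 4).Adj _ _
    rw [pathGraph_adj]
    left
    simp [edgeB]
  · exact ⟨rfl, show (0 : Fin 2) ≠ 1 by decide⟩

/-- In every copy of `F = M_k + (P₄ ∪ M_{k-2})` in the host graph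
`H = K_{k-1} + K(V₁,V₂,V₃)` plus one edge `xy` inside `V₁` (with `|V_i| ≥ 3k`), either all
vertices of the `M_k` side lie in `X ∪ V₁` and all vertices of the `P₄ ∪ M_{k-2}` side lie in
`V₂ ∪ V₃`, or vice versa. -/
theorem stmt_15 (k : ℕ) (hk : 2 ≤ k) {V₁ V₂ V₃ : Type*}
    [Fintype V₁] [Fintype V₂] [Fintype V₃]
    (hc1 : 3 * k ≤ Fintype.card V₁) (hc2 : 3 * k ≤ Fintype.card V₂)
    (hc3 : 3 * k ≤ Fintype.card V₃)
    (x y : V₁) (hxy : x ≠ y)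
    (φ : (Fin k × Fin 2) ⊕ (Fin 4 ⊕ Fin (k - 2) × Fin 2) →
      Fin (k - 1) ⊕ (V₁ ⊕ V₂ ⊕ V₃))
    (hinj : Function.Injective φ)
    (hhom : ∀ u v, (joinG (matchingGraph k) ((pathGraph 4) ⊕g matchingGraph (k - 2))).Adj u v →
      (hostGraph (k - 1) x y hxy).Adj (φ u) (φ v)) :
    ((∀ a : Fin k × Fin 2, labF (φ (Sum.inl a)) ≤ 1) ∧
      (∀ b : Fin 4 ⊕ Fin (k - 2) × Fin 2, 2 ≤ labF (φ (Sum.inr b)))) ∨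
    ((∀ b : Fin 4 ⊕ Fin (k - 2) × Fin 2, labF (φ (Sum.inr b)) ≤ 1) ∧
      (∀ a : Fin k × Fin 2, 2 ≤ labF (φ (Sum.inl a)))) := by
  classical
  have hjoin : ∀ (a : Fin k × Fin 2) (b : Fin 4 ⊕ Fin (k - 2) × Fin 2),
      (hostGraph (k - 1) x y hxy).Adj (φ (Sum.inl a)) (φ (Sum.inr b)) :=
    fun a b => hhom _ _ trivial
  have hmadj : ∀ i : Fin k,
      (hostGraph (k - 1) x y hxy).Adj (φ (Sum.inl (i, 0))) (φ (Sum.inl (i, 1))) :=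
    fun i => hhom _ _
      (show (matchingGraph k).Adj (i, 0) (i, 1) from ⟨rfl, show (0 : Fin 2) ≠ 1 by decide⟩)
  have hbadj : ∀ e : Fin 2 ⊕ Fin (k - 2),
      (hostGraph (k - 1) x y hxy).Adj (φ (Sum.inr (edgeB k (e, 0)))) (φ (Sum.inr (edgeB k (e, 1)))) :=
    fun e => hhom _ _ (edgeB_adj k e)
  have cardB : Fintype.card (Fin 2 ⊕ Fin (k - 2)) = k := by
    simp only [Fintype.card_sum, Fintype.card_fin]; omega
  by_cases hA : ∀ a, labF (φ (Sum.inl a)) ≤ 1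
  · left
    refine ⟨hA, fun b => ?_⟩
    by_contra hb
    have hb' : labF (φ (Sum.inr b)) ≤ 1 := by omega
    refine keyLemma (ι := Fin k) x y hxy (by simp only [Fintype.card_fin]; omega)
      (fun p => Option.elim p (φ (Sum.inr b)) (fun q => φ (Sum.inl q))) ?_ ?_ ?_ ?_
    · rintro (_ | q) (_ | q') h
      · rfl
      · exact absurd (hinj h) (by simp)
      · exact absurd (hinj h) (by simp)
      · exact congrArg some (Sum.inl_injective (hinj h))
    · rintro (_ | q)
      · exact hb'
      · exact hA q
    · intro i; exact hmadj i
    · intro p; exact (hjoin p b).symm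
  · by_cases hB : ∀ bb, labF (φ (Sum.inr bb)) ≤ 1
    · right
      refine ⟨hB, fun a => ?_⟩
      by_contra ha
      have ha' : labF (φ (Sum.inl a)) ≤ 1 := by omega
      refine keyLemma (ι := Fin 2 ⊕ Fin (k - 2)) x y hxy (by rw [cardB]; omega)
        (fun p => Option.elim p (φ (Sum.inl a)) (fun q => φ (Sum.inr (edgeB k q)))) ?_ ?_ ?_ ?_
      · rintro (_ | q) (_ | q') h
        · rfl
        · exact absurd (hinj h) (by simp)
        · exact absurd (hinj h) (by simp)
        · exact congrArg some (edgeB_inj k (Sum.inr_injective (hinj h)))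
      · rintro (_ | q)
        · exact ha'
        · exact hB _
      · intro i; exact hbadj i
      · intro p; exact hjoin a (edgeB k p)
    · exfalso
      push_neg at hA hB
      obtain ⟨a₀, ha₀⟩ := hA
      obtain ⟨b₀, hb₀⟩ := hB
      have ha2 : 2 ≤ labF (φ (Sum.inl a₀)) := by omega
      have hb2 : 2 ≤ labF (φ (Sum.inr b₀)) := by omega
      have hAend : ∀ i : Fin k, ∃ t : Fin 2, labF (φ (Sum.inl (i, t))) ≤ 1 := by
        intro i
        by_contra h
        push_neg at h
        have h0 : 2 ≤ labF (φ (Sum.inl (i, 0))) := by have := h 0; omega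
        have h1 : 2 ≤ labF (φ (Sum.inl (i, 1))) := by have := h 1; omega
        have d1 := adj22 (hmadj i) h0 h1
        have d2 := adj22 (hjoin (i, 0) b₀) h0 hb2
        have d3 := adj22 (hjoin (i, 1) b₀) h1 hb2
        have l1 := labF_le_three (φ (Sum.inl (i, 0)))
        have l2 := labF_le_three (φ (Sum.inl (i, 1)))
        have l3 := labF_le_three (φ (Sum.inr b₀))
        omega
      have hBend : ∀ e : Fin 2 ⊕ Fin (k - 2), ∃ t : Fin 2,
          labF (φ (Sum.inr (edgeB k (e, t)))) ≤ 1 := by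
        intro e
        by_contra h
        push_neg at h
        have h0 : 2 ≤ labF (φ (Sum.inr (edgeB k (e, 0)))) := by have := h 0; omega
        have h1 : 2 ≤ labF (φ (Sum.inr (edgeB k (e, 1)))) := by have := h 1; omega
        have d1 := adj22 (hbadj e) h0 h1
        have d2 := adj22 (hjoin a₀ (edgeB k (e, 0))).symm h0 ha2
        have d3 := adj22 (hjoin a₀ (edgeB k (e, 1))).symm h1 ha2
        have l1 := labF_le_three (φ (Sum.inr (edgeB k (e, 0))))
        have l2 := labF_le_three (φ (Sum.inr (edgeB k (e, 1))))
        have l3 := labF_le_three (φ (Sum.inl a₀))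
        omega
      refine crossLemma (ιA := Fin k) (ιB := Fin 2 ⊕ Fin (k - 2)) (by omega) x y hxy
        (by simp only [Fintype.card_fin]; omega) (by rw [cardB]; omega)
        (Sum.elim (fun i => φ (Sum.inl (i, (hAend i).choose)))
          (fun e => φ (Sum.inr (edgeB k (e, (hBend e).choose))))) ?_ ?_ ?_
      · rintro (i | e) (i' | e') h <;> simp only [Sum.elim_inl, Sum.elim_inr] at h
        · have := Sum.inl_injective (hinj h)
          exact congrArg Sum.inl (congrArg Prod.fst this)
        · exact absurd (hinj h) (by simp)
        · exact absurd (hinj h) (by simp)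
        · have := edgeB_inj k (Sum.inr_injective (hinj h))
          exact congrArg Sum.inr (congrArg Prod.fst this)
      · rintro (i | e)
        · exact (hAend i).choose_spec
        · exact (hBend e).choose_spec
      · intro i e
        exact hjoin _ _
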